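/- If a word w of length n+2 contains two letters each occurring exactly once in w, and w' is w with those two letters deleted, then √{↓(w)} = √{↓(w')}, i.e. for every x, x·x ≼ w iff x·x ≼ w'. -/

import Mathlib

theorem sqrt_dcl_erase_two_unique_letters {α : Type*} [DecidableEq α]
    (w : List α) (a b : α) (ha : w.count a = 1) (hb : w.count b = 1) (hab : a ≠ b) :
    ∀ x : List α, (x ++ x).Sublist w ↔ (x ++ x).Sublist ((w.erase a).erase b) := by
  intro x
  constructor
  · intro h
    have hca : (x ++ x).count a ≤ 1 := ha ▸ h.count_le a
    have hcb : (x ++ x).count b ≤ 1 := hb ▸ h.count_le b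
    rw [List.count_append] at hca hcb
    have hna : a ∉ x ++ x := by
      rw [← List.count_eq_zero, List.count_append]; omega
    have hnb : b ∉ x ++ x := by
      rw [← List.count_eq_zero, List.count_append]; omega
    have h1 : (x ++ x).Sublist (w.erase a) := by
      have := h.erase a
      rwa [List.erase_of_not_mem hna] at this
    have := h1.erase b
    rwa [List.erase_of_not_mem hnb] at this
  · intro h
    exact h.trans (((w.erase a).erase_sublist (a := b)).trans (w.erase_sublist (a := a)))
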